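/- Let G be a topological group and let (K_n)_{n≥1} be an increasing sequence of subsets of G with G = ⋃_{n≥1} K_n. Assume that for every n ≥ 1 and every rational q with 0 < q < 1 there exists a strongly continuous unitary representation of G on a separable complex Hilbert space which has a (K_n, q)-almost invariant unit vector but no nonzero invariant vector. Then there exists a single strongly continuous unitary representation of G on a separable complex Hilbert space which has no nonzero invariant vector and which, for every n ≥ 1 and every rational q with 0 < q < 1, has a (K_n, q)-almost invariant unit vector. -/

import Mathlib

/-- A strongly continuous unitary representation of a topological group `G` on a
separable complex Hilbert space. -/
structure StrongUnitaryRep (G : Type*) [Group G] [TopologicalSpace G] where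
  /-- the underlying Hilbert space -/
  E : Type
  [normedAddCommGroup : NormedAddCommGroup E]
  [innerProductSpace : InnerProductSpace ℂ E]
  [completeSpace : CompleteSpace E]
  [separableSpace : TopologicalSpace.SeparableSpace E]
  /-- the unitary representation -/
  π : G →* (E ≃ₗᵢ[ℂ] E)
  strongly_continuous : ∀ v : E, Continuous fun g : G => π g v

attribute [instance] StrongUnitaryRep.normedAddCommGroup
  StrongUnitaryRep.innerProductSpace StrongUnitaryRep.completeSpace
  StrongUnitaryRep.separableSpace

/-- A vector is invariant under a representation if it is fixed by every group
element. -/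
def StrongUnitaryRep.Invariant {G : Type*} [Group G] [TopologicalSpace G]
    (ρ : StrongUnitaryRep G) (v : ρ.E) : Prop :=
  ∀ g : G, ρ.π g v = v

/-- A `(Q, ε)`-almost invariant unit vector: a unit vector moved by less than
`ε` by every element of `Q`. -/
def StrongUnitaryRep.AlmostInvariantUnitVector {G : Type*} [Group G]
    [TopologicalSpace G] (ρ : StrongUnitaryRep G) (Q : Set G) (ε : ℝ)
    (v : ρ.E) : Prop :=
  ‖v‖ = 1 ∧ ∀ g ∈ Q, ‖ρ.π g v - v‖ < ε

open scoped ENNReal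
open TopologicalSpace Filter

set_option linter.unusedSectionVars false

noncomputable section lpAux

variable {ι : Type} [DecidableEq ι] {E : ι → Type}
  [∀ i, NormedAddCommGroup (E i)] [∀ i, InnerProductSpace ℂ (E i)]

lemma two_toReal_pos : (0:ℝ) < (2:ℝ≥0∞).toReal := by norm_num

lemma memℓp_comp_aux (f : ∀ i, E i ≃ₗᵢ[ℂ] E i) (x : lp E 2) :
    Memℓp (fun i => f i (x i)) 2 := by
  apply memℓp_gen
  simp only [LinearIsometryEquiv.norm_map]
  exact (memℓp_gen_iff two_toReal_pos).1 (lp.memℓp x)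

lemma lp_single_sub (i : ι) (a b : E i) :
    lp.single 2 i (a - b) = lp.single 2 i a - lp.single 2 i b := by
  apply lp.ext
  funext j
  by_cases hji : j = i
  · subst hji
    simp [lp.coeFn_sub, lp.single_apply_self]
  · simp [lp.coeFn_sub, lp.single_apply_ne _ _ _ hji]

lemma lp_norm_single (i : ι) (a : E i) : ‖lp.single 2 i a‖ = ‖a‖ := by
  have := lp.norm_single (p := 2) (by norm_num) i a
  simpa using this

def lpCongr (f : ∀ i, E i ≃ₗᵢ[ℂ] E i) : lp E 2 ≃ₗᵢ[ℂ] lp E 2 :=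
  { toLinearEquiv :=
    { toFun := fun x => ⟨fun i => f i (x i), memℓp_comp_aux f x⟩
      invFun := fun x => ⟨fun i => (f i).symm (x i),
        memℓp_comp_aux (fun i => (f i).symm) x⟩
      map_add' := fun x y => by
        apply lp.ext
        funext i
        simp [lp.coeFn_add]
        rfl
      map_smul' := fun c x => by
        apply lp.ext
        funext i
        simp [lp.coeFn_smul]
      left_inv := fun x => lp.ext (funext fun i => (f i).symm_apply_apply (x i))
      right_inv := fun x => lp.ext (funext fun i => (f i).apply_symm_apply (x i)) }
    norm_map' := fun x => by
      rw [lp.norm_eq_tsum_rpow two_toReal_pos, lp.norm_eq_tsum_rpow two_toReal_pos]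
      congr 1
      apply tsum_congr
      intro i
      congr 1
      exact (f i).norm_map (x i) }

@[simp] lemma lpCongr_apply_coe (f : ∀ i, E i ≃ₗᵢ[ℂ] E i) (x : lp E 2) (i : ι) :
    (lpCongr f x : ∀ i, E i) i = f i (x i) := rfl

lemma lpCongr_single (f : ∀ i, E i ≃ₗᵢ[ℂ] E i) (i : ι) (a : E i) :
    lpCongr f (lp.single 2 i a) = lp.single 2 i (f i a) := by
  apply lp.ext
  funext j
  by_cases hji : j = i
  · subst hji
    simp [lp.single_apply_self]
  · simp [lp.single_apply_ne _ _ _ hji, Pi.single_eq_of_ne hji]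

variable {G : Type*} [Group G] [TopologicalSpace G]

/-- The diagonal representation on the `ℓ²` direct sum. -/
def lpRep (π : ∀ i, G →* (E i ≃ₗᵢ[ℂ] E i)) : G →* (lp E 2 ≃ₗᵢ[ℂ] lp E 2) where
  toFun g := lpCongr (fun i => π i g)
  map_one' := by
    apply LinearIsometryEquiv.ext
    intro x
    apply lp.ext
    funext i
    simp
  map_mul' g h := by
    apply LinearIsometryEquiv.ext
    intro x
    apply lp.ext
    funext i
    simp [LinearIsometryEquiv.coe_mul]

lemma lpRep_apply_coe (π : ∀ i, G →* (E i ≃ₗᵢ[ℂ] E i)) (g : G) (x : lp E 2) (i : ι) :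
    (lpRep π g x : ∀ i, E i) i = π i g (x i) := rfl

lemma lpRep_continuous [∀ i, CompleteSpace (E i)]
    (π : ∀ i, G →* (E i ≃ₗᵢ[ℂ] E i))
    (hc : ∀ i (v : E i), Continuous fun g : G => π i g v)
    (v : lp E 2) : Continuous fun g : G => lpRep π g v := by
  rw [continuous_iff_continuousAt]
  intro g₀
  rw [ContinuousAt, Metric.tendsto_nhds]
  intro ε hε
  -- approximate v by a finitely supported vector
  obtain ⟨s, hs⟩ : ∃ s : Finset ι,
      ‖v - ∑ i ∈ s, lp.single 2 i (v i)‖ < ε / 4 := by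
    have h1 := lp.hasSum_single (p := 2) (by norm_num) v
    obtain ⟨s, hs⟩ := (Metric.tendsto_nhds.1 h1 (ε / 4) (by linarith)).exists
    exact ⟨s, by rwa [dist_eq_norm, ← norm_neg, neg_sub] at hs⟩
  set P : lp E 2 := ∑ i ∈ s, lp.single 2 i (v i) with hP
  set w : lp E 2 := v - P with hw
  have hvPw : v = P + w := by rw [hw]; abel
  set φ : G → ℝ := fun g => ∑ i ∈ s, ‖π i g (v i) - π i g₀ (v i)‖ with hφ
  have hφc : Continuous φ := by
    apply continuous_finset_sum
    intro i _
    exact ((hc i (v i)).sub continuous_const).norm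
  have hφ0 : φ g₀ = 0 := by simp [hφ]
  have hev : ∀ᶠ g in nhds g₀, φ g < ε / 2 := by
    have ht : Tendsto φ (nhds g₀) (nhds 0) := by
      simpa [hφ0] using hφc.tendsto g₀
    exact ht.eventually_lt_const (by linarith)
  filter_upwards [hev] with g hg
  rw [dist_eq_norm]
  have hTP : ∀ g' : G, lpRep π g' P = ∑ i ∈ s, lp.single 2 i (π i g' (v i)) := by
    intro g'
    rw [hP, map_sum]
    exact Finset.sum_congr rfl fun i _ => lpCongr_single _ i (v i)
  have key : lpRep π g v - lpRep π g₀ v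
      = (∑ i ∈ s, lp.single 2 i (π i g (v i) - π i g₀ (v i)))
        + (lpRep π g w - lpRep π g₀ w) := by
    have e1 : lpRep π g v = lpRep π g P + lpRep π g w := by rw [← map_add, ← hvPw]
    have e2 : lpRep π g₀ v = lpRep π g₀ P + lpRep π g₀ w := by rw [← map_add, ← hvPw]
    rw [e1, e2, hTP g, hTP g₀,
      Finset.sum_congr rfl fun i _ => lp_single_sub i (π i g (v i)) (π i g₀ (v i)),
      Finset.sum_sub_distrib]
    abel
  rw [key]
  have h1 : ‖∑ i ∈ s, lp.single 2 i (π i g (v i) - π i g₀ (v i))‖ ≤ φ g := by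
    refine (norm_sum_le _ _).trans_eq ?_
    exact Finset.sum_congr rfl fun i _ => lp_norm_single i _
  have h2 : ‖lpRep π g w - lpRep π g₀ w‖ ≤ 2 * ‖w‖ := by
    refine (norm_sub_le _ _).trans ?_
    rw [LinearIsometryEquiv.norm_map, LinearIsometryEquiv.norm_map]
    linarith
  have hwn : ‖w‖ < ε / 4 := hs
  calc ‖(∑ i ∈ s, lp.single 2 i (π i g (v i) - π i g₀ (v i)))
        + (lpRep π g w - lpRep π g₀ w)‖
      ≤ ‖∑ i ∈ s, lp.single 2 i (π i g (v i) - π i g₀ (v i))‖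
        + ‖lpRep π g w - lpRep π g₀ w‖ := norm_add_le _ _
    _ < ε := by linarith

lemma lp_separableSpace [Countable ι] [∀ i, SeparableSpace (E i)] :
    SeparableSpace (lp E 2) := by
  rw [← isSeparable_univ_iff]
  have h1 : ∀ i : ι, IsSeparable (Set.range (lp.single 2 i : E i → lp E 2)) := by
    intro i
    have hiso : Isometry (lp.single 2 i : E i → lp E 2) := by
      refine Isometry.of_dist_eq fun a b => ?_
      rw [dist_eq_norm, dist_eq_norm, ← lp_single_sub, lp_norm_single]
    rw [← Set.image_univ]
    exact (isSeparable_univ_iff.2 inferInstance).image hiso.continuous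
  have h2 : IsSeparable (⋃ i : ι, Set.range (lp.single 2 i : E i → lp E 2)) :=
    IsSeparable.iUnion h1
  have h3 := h2.span (R := ℂ)
  have h4 := h3.closure
  refine h4.mono fun x _ => ?_
  have hx := lp.hasSum_single (p := 2) (by norm_num) x
  refine mem_closure_of_tendsto hx (Eventually.of_forall fun t => ?_)
  exact Submodule.sum_mem _ fun i _ =>
    Submodule.subset_span (Set.mem_iUnion.2 ⟨i, Set.mem_range_self _⟩)

end lpAux

/-- If for every `n ≥ 1` and every rational `0 < q < 1` there is a strongly
continuous unitary representation of `G` on a separable complex Hilbert space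
with a `(K_n, q)`-almost invariant unit vector but no nonzero invariant vector,
then there is a single such representation without nonzero invariant vectors
having `(K_n, q)`-almost invariant unit vectors for all `n ≥ 1` and all
rational `0 < q < 1`. -/
theorem exists_single_rep_with_almost_invariant_vectors
    {G : Type*} [Group G] [TopologicalSpace G] [IsTopologicalGroup G]
    (K : ℕ → Set G) (hK : Monotone K) (hcover : (⋃ n, K n) = Set.univ)
    (h : ∀ n : ℕ, 1 ≤ n → ∀ q : ℚ, 0 < q → q < 1 →
      ∃ ρ : StrongUnitaryRep G,
        (∃ v : ρ.E, ρ.AlmostInvariantUnitVector (K n) (q : ℝ) v) ∧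
        (∀ v : ρ.E, ρ.Invariant v → v = 0)) :
    ∃ ρ : StrongUnitaryRep G,
      (∀ v : ρ.E, ρ.Invariant v → v = 0) ∧
      ∀ n : ℕ, 1 ≤ n → ∀ q : ℚ, 0 < q → q < 1 →
        ∃ v : ρ.E, ρ.AlmostInvariantUnitVector (K n) (q : ℝ) v := by
  choose ρ hv hinv using fun i : {p : ℕ × ℚ // 1 ≤ p.1 ∧ 0 < p.2 ∧ p.2 < 1} =>
    h i.1.1 i.2.1 i.1.2 i.2.2.1 i.2.2.2
  choose v hvspec using hv
  refine ⟨{ E := lp (fun i => (ρ i).E) 2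
            π := lpRep (fun i => (ρ i).π)
            separableSpace := lp_separableSpace
            strongly_continuous :=
              lpRep_continuous _ (fun i => (ρ i).strongly_continuous) },
    ?_, ?_⟩
  · intro V hV
    apply lp.ext
    funext i
    have hinvi : (ρ i).Invariant (V i) := by
      intro g
      exact congrArg (fun z : lp (fun j => (ρ j).E) 2 => (z : ∀ j, (ρ j).E) i) (hV g)
    have := hinv i (V i) hinvi
    simpa using this
  · intro n hn q hq hq1
    set i : {p : ℕ × ℚ // 1 ≤ p.1 ∧ 0 < p.2 ∧ p.2 < 1} := ⟨(n, q), hn, hq, hq1⟩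
    refine ⟨lp.single 2 i (v i), ?_, ?_⟩
    · rw [lp_norm_single]
      exact (hvspec i).1
    · intro g hg
      have heq : lpRep (fun j => (ρ j).π) g (lp.single 2 i (v i))
          = lp.single 2 i ((ρ i).π g (v i)) := lpCongr_single (fun j => (ρ j).π g) i (v i)
      show ‖lpRep (fun j => (ρ j).π) g (lp.single 2 i (v i)) - lp.single 2 i (v i)‖ < (q : ℝ)
      rw [heq, ← lp_single_sub, lp_norm_single]
      exact (hvspec i).2 g hg
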